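/- Fix x ∈ ℝ with x > −1. Then the function β ↦ log(β·(1+x)^(1−β) + (1−β)·(1+x)^(−β)) / (β·(1−β)) tends to x − log(1+x) as β tends to 0 within the open interval (0,1). -/

import Mathlib

open Real Filter

theorem renyi_logdet_limit_beta_zero (x : ℝ) (hx : -1 < x) :
    Tendsto (fun β : ℝ =>
        Real.log (β * (1 + x) ^ (1 - β) + (1 - β) * (1 + x) ^ (-β)) / (β * (1 - β)))
      (nhdsWithin 0 (Set.Ioo (0 : ℝ) 1)) (nhds (x - Real.log (1 + x))) := by
  have ht : (0:ℝ) < 1 + x := by linarith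
  have hd : HasDerivAt (fun β : ℝ => Real.log (1 + β * x)) x 0 := by
    have h1 : HasDerivAt (fun β : ℝ => 1 + β * x) x 0 := by
      simpa using ((hasDerivAt_id (0:ℝ)).mul_const x).const_add 1
    have := h1.log (by norm_num)
    simpa using this
  have hslope : Tendsto (fun β : ℝ => Real.log (1 + β * x) / β)
      (nhdsWithin 0 {(0:ℝ)}ᶜ) (nhds x) := by
    have h := hasDerivAt_iff_tendsto_slope.mp hd
    refine h.congr' ?_
    filter_upwards [self_mem_nhdsWithin] with β hβ
    simp [slope_def_field]
  have h1 : Tendsto (fun β : ℝ => Real.log (1 + β * x) / β)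
      (nhdsWithin 0 (Set.Ioo 0 1)) (nhds x) :=
    hslope.mono_left (nhdsWithin_mono _ (fun y hy => ne_of_gt hy.1))
  have h2 : Tendsto (fun β : ℝ => (1 - β)⁻¹) (nhdsWithin 0 (Set.Ioo 0 1)) (nhds 1) := by
    have h3 : Tendsto (fun β : ℝ => (1 - β)⁻¹) (nhds 0) (nhds 1) := by
      have := ((continuousAt_const.sub continuousAt_id).inv₀
        (by norm_num : (1:ℝ) - 0 ≠ 0)).tendsto
      convert this using 2 <;> simp [Pi.inv_apply, Pi.sub_apply]
    exact h3.mono_left nhdsWithin_le_nhds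
  have hmain : Tendsto (fun β : ℝ =>
      (Real.log (1 + β * x) / β - Real.log (1 + x)) * (1 - β)⁻¹)
      (nhdsWithin 0 (Set.Ioo 0 1)) (nhds (x - Real.log (1 + x))) := by
    simpa using (h1.sub tendsto_const_nhds).mul h2
  refine hmain.congr' ?_
  filter_upwards [self_mem_nhdsWithin] with β hβ
  obtain ⟨hβ0, hβ1⟩ := hβ
  have hne : β ≠ 0 := ne_of_gt hβ0
  have h1β : (0:ℝ) < 1 - β := by linarith
  have hpos : (0:ℝ) < 1 + β * x := by nlinarith
  have key : β * (1 + x) ^ (1 - β) + (1 - β) * (1 + x) ^ (-β)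
      = (1 + x) ^ (-β) * (1 + β * x) := by
    have h4 : (1 + x) ^ (1 - β) = (1 + x) ^ (-β) * (1 + x) := by
      rw [show (1:ℝ) - β = -β + 1 by ring, Real.rpow_add ht, Real.rpow_one]
    rw [h4]; ring
  rw [key, Real.log_mul (ne_of_gt (Real.rpow_pos_of_pos ht _)) (ne_of_gt hpos),
    Real.log_rpow ht]
  field_simp
  ring
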